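/- For any unital quantale Q and any nonempty set X, the map sending a kernel k ∈ Q^(X×X) to the Q-module transform h_k (defined by h_k(f)(y) = ⋁_{x∈X} f(x)·k(x,y)) is a quantale isomorphism from the matrix quantale M_X(Q) (with pointwise joins and product (h⋆k)(x,y) = ⋁_{z∈X} h(x,z)·k(z,y), unit the identity matrix) onto the quantale End_Q(Q^X) of Q-module endomorphisms of Q^X (with pointwise joins and multiplication h₁h₂ := h₂ ∘ h₁). -/

import Mathlib

/-- The `Q`-module transform `h_k : Q^X → Q^X` with kernel `k ∈ Q^(X×X)`,
defined by `h_k f y = ⨆ x, f x * k x y`. -/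
def hk {Q : Type*} [Monoid Q] [CompleteLattice Q] {X : Type*} (k : X → X → Q)
    (f : X → Q) : X → Q := fun y => ⨆ x, f x * k x y

/-- A map `h : Q^X → Q^X` is a `Q`-module endomorphism of the free module `Q^X`:
it preserves arbitrary joins and the (pointwise) scalar multiplication. -/
def IsEndo {Q : Type*} [Monoid Q] [CompleteLattice Q] {X : Type*}
    (h : (X → Q) → (X → Q)) : Prop :=
  (∀ S : Set (X → Q), h (sSup S) = ⨆ f ∈ S, h f) ∧
  (∀ (a : Q) (f : X → Q), h (fun x => a * f x) = fun x => a * h f x)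

/-- The matrix product `(h ⋆ k)(x,y) = ⨆ z, h x z * k z y` of the matrix quantale `M_X(Q)`. -/
def matStar {Q : Type*} [Monoid Q] [CompleteLattice Q] {X : Type*} (k l : X → X → Q) :
    X → X → Q := fun x y => ⨆ z, k x z * l z y

/-- The identity matrix, unit of the matrix quantale `M_X(Q)`. -/
def matId (Q X : Type*) [Monoid Q] [CompleteLattice Q] [DecidableEq X] :
    X → X → Q := fun x y => if x = y then 1 else ⊥

open IsQuantale

section Aux
variable {Q : Type*} [Monoid Q] [CompleteLattice Q] [IsQuantale Q] {X : Type*}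

lemma qbot_mul (a : Q) : (⊥ : Q) * a = ⊥ := by
  simpa using sSup_mul_distrib (α := Q) (s := ∅) (x := a)

lemma qmul_bot (a : Q) : a * (⊥ : Q) = ⊥ := by
  simpa using mul_sSup_distrib (α := Q) (s := ∅) (x := a)

/-- delta function -/
def ee (Q : Type*) [Monoid Q] [CompleteLattice Q] [DecidableEq X] (x : X) : X → Q :=
  fun z => if x = z then 1 else ⊥

lemma hk_ee [DecidableEq X] (k : X → X → Q) (x : X) : hk k (ee Q x) = k x := by
  funext y
  apply le_antisymm
  · apply iSup_le; intro z
    by_cases h : x = z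
    · subst h; simp [ee]
    · simp [ee, h, qbot_mul]
  · have h1 : k x y = ee Q x x * k x y := by simp [ee]
    rw [h1]; exact le_iSup (fun z => ee Q x z * k z y) x

lemma decomp [DecidableEq X] (f : X → Q) :
    f = sSup (Set.range fun x => fun z => f x * ee Q x z) := by
  funext y
  rw [sSup_apply]
  apply le_antisymm
  · have h1 : f y = f y * ee Q y y := by simp [ee]
    rw [h1]
    exact le_iSup_of_le ⟨_, Set.mem_range_self y⟩ le_rfl
  · apply iSup_le; rintro ⟨g, x, rfl⟩
    show f x * ee Q x y ≤ f y
    by_cases h : x = y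
    · subst h; simp [ee]
    · simp [ee, h, qmul_bot]

end Aux

theorem quantale_matrix_iso_endomorphisms (Q X : Type*) [Monoid Q] [CompleteLattice Q]
    [IsQuantale Q] [DecidableEq X] [Nonempty X] :
    (∀ k : X → X → Q, IsEndo (hk k)) ∧
    Function.Injective (hk : (X → X → Q) → (X → Q) → (X → Q)) ∧
    (∀ h : (X → Q) → (X → Q), IsEndo h → ∃ k : X → X → Q, hk k = h) ∧
    (∀ K : Set (X → X → Q), hk (sSup K) = ⨆ k ∈ K, hk k) ∧
    (∀ k l : X → X → Q, hk (matStar k l) = hk l ∘ hk k) ∧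
    (hk (matId Q X) = id) := by
  have endo : ∀ k : X → X → Q, IsEndo (hk k) := by
    intro k
    constructor
    · intro S
      funext y
      simp only [hk, sSup_apply, iSup_apply]
      simp only [Quantale.iSup_mul_distrib]
      rw [iSup_comm, iSup_subtype']
    · intro a f
      funext y
      simp only [hk, Quantale.mul_iSup_distrib]
      exact iSup_congr fun x => mul_assoc _ _ _
  refine ⟨endo, ?_, ?_, ?_, ?_, ?_⟩
  · intro k l hkl
    funext x y
    rw [← hk_ee k x, ← hk_ee l x, hkl]
  · intro h ⟨hS, hM⟩
    refine ⟨fun x => h (ee Q x), ?_⟩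
    funext f y
    conv_rhs => rw [decomp (Q := Q) f, hS, iSup_range]
    simp only [iSup_apply, hk]
    exact iSup_congr fun x => by rw [hM]
  · intro K
    funext f y
    simp only [hk, iSup_apply, sSup_apply]
    simp only [Quantale.mul_iSup_distrib]
    rw [iSup_comm, iSup_subtype']
  · intro k l
    funext f y
    simp only [hk, matStar, Function.comp_apply]
    simp only [Quantale.mul_iSup_distrib]
    simp only [Quantale.iSup_mul_distrib]
    rw [iSup_comm]
    exact iSup_congr fun z => iSup_congr fun x => (mul_assoc _ _ _).symm
  · funext f y
    simp only [hk, matId, id_eq]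
    apply le_antisymm
    · apply iSup_le; intro x
      by_cases h : x = y
      · subst h; simp
      · simp [h, qmul_bot]
    · have h1 : f y = f y * (if y = y then (1:Q) else ⊥) := by simp
      rw [h1]; exact le_iSup (fun x => f x * (if x = y then (1:Q) else ⊥)) y
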